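/- Assume |{i : u_i ≥ 0}| ≥ κ, κ ≥ 2, and G^S > ΔU_{ĸ̂}. Then u* := (∑_{j∈I} u_j)/(κ−1) satisfies 0 < u* < u_{ĸ̂}, there is a unique k* with n < k* ≤ ĸ̂ and u_{k*−1} ≤ u* < u_{k*}, and T* := ∑_{j≥k*}(u_j − u*) > G^S. -/

import Mathlib

open Finset

/-- `r ∈ S₀`: `r` is zero-sum and `∑_{i∈C}(u_i + r_i) ≥ 0` for every coalition `C`
with `|C| ≥ ĸ̂ = I - κ + 1` (characterization of stable promises contingent on the reform). -/
def inS0 {I : ℕ} (κ : ℕ) (u r : Fin I → ℝ) : Prop :=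
  (∑ i, r i = 0) ∧
  ∀ C : Finset (Fin I), I - κ + 1 ≤ C.card → 0 ≤ ∑ i ∈ C, (u i + r i)

/-- Total promises transfer `T(r) = (1/2) ∑_i |r_i|`. -/
noncomputable def totT {I : ℕ} (r : Fin I → ℝ) : ℝ := (∑ i, |r i|) / 2

/-- `r ∈ E`: `r` is stable and minimizes the total transfer over `S₀`. -/
def inE {I : ℕ} (κ : ℕ) (u r : Fin I → ℝ) : Prop :=
  inS0 κ u r ∧ ∀ r' : Fin I → ℝ, inS0 κ u r' → totT r ≤ totT r'

/-- with `|C^R| ≥ κ`, `κ ≥ 2`, `G^S > ΔU_{ĸ̂}`: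
`u* = (∑_j u_j)/(κ-1)` satisfies `0 < u* < u_{ĸ̂}`, there is a unique `k*` with
`n < k* ≤ ĸ̂` and `u_{k*-1} ≤ u* < u_{k*}`, and `T* = ∑_{j ≥ k*}(u_j - u*) > G^S`. -/
theorem critical_member_exists {I : ℕ} (κ : ℕ) (hκ : 2 ≤ κ) (hκI : κ ≤ I)
    (u : Fin I → ℝ) (hmono : Monotone u) (hu : 0 < ∑ i, u i)
    (hsupp : κ ≤ (univ.filter (fun i : Fin I => 0 ≤ u i)).card)
    (n : ℕ) (hn : n = (univ.filter (fun i : Fin I => u i < 0)).card)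
    (GS ustar : ℝ)
    (hGS : GS = -∑ i ∈ univ.filter (fun i : Fin I => (i : ℕ) < I - κ + 1), u i)
    (hustar : ustar = (∑ j, u j) / ((κ : ℝ) - 1))
    (hGSgt : ∑ j ∈ univ.filter (fun j : Fin I => I - κ + 1 ≤ (j : ℕ)),
        (u j - u ⟨I - κ, by omega⟩) < GS) :
    (0 < ustar ∧ ustar < u ⟨I - κ, by omega⟩) ∧
    (∃! k : Fin I, n ≤ (k : ℕ) ∧ (k : ℕ) < I - κ + 1 ∧
        (∀ i : Fin I, i < k → u i ≤ ustar) ∧ ustar < u k) ∧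
    (∀ k : Fin I, n ≤ (k : ℕ) → (k : ℕ) < I - κ + 1 →
        (∀ i : Fin I, i < k → u i ≤ ustar) → ustar < u k →
        GS < ∑ j ∈ univ.filter (fun j : Fin I => k ≤ j), (u j - ustar)) := by
  classical
  have hκ1 : (0:ℝ) < (κ:ℝ) - 1 := by
    have h2 : (2:ℝ) ≤ (κ:ℝ) := by exact_mod_cast hκ
    linarith
  have hpos : 0 < ustar := by
    rw [hustar]; exact div_pos hu hκ1
  have hS : (∑ j, u j) = ((κ:ℝ) - 1) * ustar := by
    rw [hustar]; field_simp
  have hB : (univ.filter (fun j : Fin I => I - κ + 1 ≤ (j : ℕ))).card = κ - 1 := by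
    have h : I - κ + 1 < I := by omega
    have he : (univ.filter (fun j : Fin I => I - κ + 1 ≤ (j : ℕ)))
        = Ici (⟨I - κ + 1, h⟩ : Fin I) := by
      ext j; simp [Fin.le_def]
    rw [he, Fin.card_Ici]; simp only [Fin.val_mk]; omega
  have hBcast : ((univ.filter (fun j : Fin I => I - κ + 1 ≤ (j:ℕ))).card : ℝ) = (κ:ℝ) - 1 := by
    rw [hB, Nat.cast_sub (by omega : 1 ≤ κ), Nat.cast_one]
  have hsplit : ∑ i ∈ univ.filter (fun i : Fin I => (i:ℕ) < I - κ + 1), u i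
      + ∑ j ∈ univ.filter (fun j : Fin I => I - κ + 1 ≤ (j:ℕ)), u j = ∑ j, u j := by
    rw [← Finset.sum_filter_add_sum_filter_not univ (fun i : Fin I => (i:ℕ) < I - κ + 1) u]
    refine congrArg₂ (· + ·) rfl ?_
    refine Finset.sum_congr ?_ (fun _ _ => rfl)
    apply Finset.filter_congr
    intro i _
    simp [not_lt]
  have hGS' : GS = ∑ j ∈ univ.filter (fun j : Fin I => I - κ + 1 ≤ (j:ℕ)), (u j - ustar) := by
    rw [Finset.sum_sub_distrib, Finset.sum_const, nsmul_eq_mul, hBcast, hGS]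
    linarith
  set m : Fin I := ⟨I - κ, by omega⟩ with hm
  have hGSgt' : ∑ j ∈ univ.filter (fun j : Fin I => I - κ + 1 ≤ (j : ℕ)), (u j - u m) < GS :=
    hGSgt
  have hum : ustar < u m := by
    rw [hGS'] at hGSgt'
    rw [Finset.sum_sub_distrib, Finset.sum_sub_distrib, Finset.sum_const, Finset.sum_const,
      nsmul_eq_mul, nsmul_eq_mul, hBcast] at hGSgt'
    have h : ((κ:ℝ) - 1) * ustar < ((κ:ℝ) - 1) * u m := by linarith
    exact (mul_lt_mul_iff_right₀ hκ1).mp h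
  have hnle : ∀ k : Fin I, ustar < u k → n ≤ (k:ℕ) := by
    intro k hk
    have hsub : univ.filter (fun i : Fin I => u i < 0) ⊆ Iio k := by
      intro i hi
      simp only [mem_filter] at hi
      rw [mem_Iio]
      by_contra h
      push_neg at h
      have := hmono h
      linarith [hi.2]
    calc n = (univ.filter (fun i : Fin I => u i < 0)).card := hn
      _ ≤ (Iio k).card := card_le_card hsub
      _ = (k:ℕ) := Fin.card_Iio k
  -- existence of minimal k
  have hTne : (univ.filter (fun i : Fin I => ustar < u i)).Nonempty := ⟨m, by simp [hum]⟩
  set k0 : Fin I := (univ.filter (fun i : Fin I => ustar < u i)).min' hTne with hk0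
  have hk0T : k0 ∈ univ.filter (fun i : Fin I => ustar < u i) := Finset.min'_mem _ _
  have huk0 : ustar < u k0 := (mem_filter.mp hk0T).2
  have hk0m : k0 ≤ m := Finset.min'_le _ m (by simp [hum])
  have hk0lt : (k0:ℕ) < I - κ + 1 := by
    have := hk0m
    rw [Fin.le_def] at this
    simp only [hm, Fin.val_mk] at this
    omega
  have hbelow : ∀ i : Fin I, i < k0 → u i ≤ ustar := by
    intro i hi
    by_contra h
    push_neg at h
    have : k0 ≤ i := Finset.min'_le _ i (by simp [h])
    exact absurd hi (not_lt.mpr this)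
  refine ⟨⟨hpos, hum⟩, ⟨k0, ⟨hnle k0 huk0, hk0lt, hbelow, huk0⟩, ?_⟩, ?_⟩
  · rintro y ⟨-, -, hy1, hy2⟩
    by_contra hne
    rcases lt_or_gt_of_ne hne with h | h
    · exact absurd (hbelow y h) (not_le.mpr hy2)
    · exact absurd (hy1 k0 h) (not_le.mpr huk0)
  · intro k hnk hklt hkb hk
    have hsplitC : ∑ j ∈ univ.filter (fun j : Fin I => k ≤ j), (u j - ustar)
        = ∑ j ∈ univ.filter (fun j : Fin I => k ≤ j ∧ (j:ℕ) < I - κ + 1), (u j - ustar)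
        + ∑ j ∈ univ.filter (fun j : Fin I => I - κ + 1 ≤ (j:ℕ)), (u j - ustar) := by
      rw [← Finset.sum_filter_add_sum_filter_not (univ.filter (fun j : Fin I => k ≤ j))
        (fun j => (j:ℕ) < I - κ + 1)]
      rw [Finset.filter_filter, Finset.filter_filter]
      refine congrArg₂ (· + ·) rfl ?_
      refine Finset.sum_congr ?_ (fun _ _ => rfl)
      apply Finset.filter_congr
      intro j _
      simp only [not_lt, Fin.le_def]
      omega
    have hA'pos : 0 < ∑ j ∈ univ.filter
        (fun j : Fin I => k ≤ j ∧ (j:ℕ) < I - κ + 1), (u j - ustar) := by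
      apply Finset.sum_pos
      · intro j hj
        simp only [mem_filter] at hj
        have := hmono hj.2.1
        linarith
      · exact ⟨k, by simp [hklt]; omega⟩
    rw [hsplitC]
    linarith
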